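/- Let q > 1 and let φ₀ : ℝ → ℝ be a Schwartz function. Define φ_{m+1}(x) = φ_m(x) − q^{−(m+1)} · φ_m(x/q) for m ∈ ℕ. Then for all k, ℓ, m ∈ ℕ, sup_{x∈ℝ} |x^k · φ_m^{(ℓ)}(x)| ≤ exp(q^{k−ℓ}/(q−1)) · sup_{x∈ℝ} |x^k · φ₀^{(ℓ)}(x)|, where φ^{(ℓ)} denotes the ℓ-th derivative. -/

import Mathlib

private lemma itd_sub' {f g : ℝ → ℝ} (hf : ContDiff ℝ (⊤ : ℕ∞) f) (hg : ContDiff ℝ (⊤ : ℕ∞) g)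
    (n : ℕ) (x : ℝ) :
    iteratedDeriv n (fun y => f y - g y) x = iteratedDeriv n f x - iteratedDeriv n g x := by
  have : (fun y => f y - g y) = f - g := rfl
  rw [this, ← iteratedDerivWithin_univ, ← iteratedDerivWithin_univ, ← iteratedDerivWithin_univ]
  exact iteratedDerivWithin_sub (Set.mem_univ x) uniqueDiffOn_univ
    (hf.of_le (by exact_mod_cast le_top)).contDiffWithinAt (hg.of_le (by exact_mod_cast le_top)).contDiffWithinAt

private lemma itd_cmul' (c : ℝ) {f : ℝ → ℝ} (hf : ContDiff ℝ (⊤ : ℕ∞) f) (n : ℕ) (x : ℝ) :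
    iteratedDeriv n (fun y => c * f y) x = c * iteratedDeriv n f x := by
  rw [← iteratedDerivWithin_univ, ← iteratedDerivWithin_univ]
  exact iteratedDerivWithin_const_mul (Set.mem_univ x) uniqueDiffOn_univ c
    (hf.of_le (by exact_mod_cast le_top)).contDiffWithinAt

/-- uniform bounds for the Schwartz seminorms of the sequence `φ_m`. -/
theorem stmt_7 (q : ℝ) (hq : 1 < q) (φ₀ : SchwartzMap ℝ ℝ)
    (φ : ℕ → ℝ → ℝ) (hφ0 : φ 0 = ⇑φ₀)
    (hrec : ∀ m : ℕ, ∀ x : ℝ, φ (m + 1) x = φ m x - q ^ (-(m + 1 : ℤ)) * φ m (x / q)) :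
    ∀ k ℓ m : ℕ,
      (⨆ x : ℝ, |x ^ k * iteratedDeriv ℓ (φ m) x|) ≤
        Real.exp (q ^ ((k : ℤ) - (ℓ : ℤ)) / (q - 1)) *
          (⨆ x : ℝ, |x ^ k * iteratedDeriv ℓ (⇑φ₀) x|) := by
  intro k ℓ m
  have hq0 : (0:ℝ) < q := lt_trans one_pos hq
  set D : ℤ := (k : ℤ) - (ℓ : ℤ) with hD
  -- smoothness of each φ m
  have hsm : ∀ n, ContDiff ℝ ((⊤ : ℕ∞) : WithTop ℕ∞) (φ n) := by
    intro n
    induction n with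
    | zero => rw [hφ0]; exact φ₀.smooth ⊤
    | succ n ih =>
      have h1 : φ (n+1) = fun x => φ n x - q ^ (-(n+1:ℤ)) * φ n (x / q) := funext (hrec n)
      rw [h1]
      exact ih.sub (contDiff_const.mul (ih.comp (contDiff_id.div_const q)))
  set F : ℕ → ℝ → ℝ := fun n x => |x ^ k * iteratedDeriv ℓ (φ n) x| with hF
  -- derivative recursion
  have hkey : ∀ n x, iteratedDeriv ℓ (φ (n+1)) x
      = iteratedDeriv ℓ (φ n) x
        - q ^ (-(n+1:ℤ)) * (q⁻¹ ^ ℓ * iteratedDeriv ℓ (φ n) (q⁻¹ * x)) := by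
    intro n x
    have h1 : φ (n+1) = fun x => φ n x - q ^ (-(n+1:ℤ)) * φ n (q⁻¹ * x) := by
      funext y; rw [hrec n y, div_eq_inv_mul]
    have hcomp : ContDiff ℝ ((⊤ : ℕ∞) : WithTop ℕ∞) (fun x : ℝ => φ n (q⁻¹ * x)) :=
      (hsm n).comp (contDiff_const.mul contDiff_id)
    rw [h1, itd_sub' (hsm n) (contDiff_const.mul hcomp) ℓ x, itd_cmul' _ hcomp ℓ x]
    have h2 := iteratedDeriv_comp_const_mul (n := ℓ) ((hsm n).of_le (by exact_mod_cast le_top)) q⁻¹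
    rw [congrFun h2 x]
  -- constant juggling
  have hconst : ∀ n : ℕ, q ^ (-(n+1:ℤ)) * q⁻¹ ^ ℓ * q ^ k = q ^ (D - (n+1:ℤ)) := by
    intro n
    have h1 : q⁻¹ ^ ℓ = q ^ (-(ℓ:ℤ)) := by rw [zpow_neg, zpow_natCast, inv_pow]
    have h2 : q ^ k = q ^ (k:ℤ) := (zpow_natCast q k).symm
    rw [h1, h2, ← zpow_add₀ hq0.ne', ← zpow_add₀ hq0.ne']
    congr 1
    simp [hD]; ring
  -- main induction
  have claim : ∀ n, BddAbove (Set.range (F n)) ∧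
      (⨆ x, F n x) ≤ (∏ j ∈ Finset.range n, (1 + q ^ (D - (j+1:ℤ)))) * (⨆ x, F 0 x) := by
    intro n
    induction n with
    | zero =>
      constructor
      · refine ⟨SchwartzMap.seminorm ℝ k ℓ φ₀, ?_⟩
        rintro _ ⟨x, rfl⟩
        have := SchwartzMap.le_seminorm' ℝ k ℓ φ₀ x
        simpa [hF, hφ0, abs_mul, abs_pow, Real.norm_eq_abs] using this
      · simp
    | succ n ih =>
      obtain ⟨hb, hSn⟩ := ih
      have hle : ∀ x, F n x ≤ ⨆ x, F n x := fun x => le_ciSup hb x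
      have hSnn : (0:ℝ) ≤ ⨆ x, F n x := le_trans (abs_nonneg _) (hle 0)
      have ha : (0:ℝ) < q ^ (D - (n+1:ℤ)) := zpow_pos hq0 _
      have hpt : ∀ x, F (n+1) x ≤ (1 + q ^ (D - (n+1:ℤ))) * (⨆ x, F n x) := by
        intro x
        have hxk : |x ^ k * (q⁻¹ ^ ℓ * iteratedDeriv ℓ (φ n) (q⁻¹ * x))|
            = q⁻¹ ^ ℓ * q ^ k * |(q⁻¹ * x) ^ k * iteratedDeriv ℓ (φ n) (q⁻¹ * x)| := by
          have hqk : q ^ k * q⁻¹ ^ k = (1:ℝ) := by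
            rw [← mul_pow, mul_inv_cancel₀ hq0.ne', one_pow]
          simp only [abs_mul, abs_pow, mul_pow, abs_of_pos (inv_pos.mpr hq0)]
          linear_combination (-(q⁻¹ ^ ℓ * |x| ^ k *
            |iteratedDeriv ℓ (φ n) (q⁻¹ * x)|)) * hqk
        calc F (n+1) x
            = |x ^ k * iteratedDeriv ℓ (φ n) x
              - q ^ (-(n+1:ℤ)) * (x ^ k * (q⁻¹ ^ ℓ * iteratedDeriv ℓ (φ n) (q⁻¹ * x)))| := by
              rw [hF]; simp only [hkey n x]; ring_nf
          _ ≤ |x ^ k * iteratedDeriv ℓ (φ n) x|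
              + |q ^ (-(n+1:ℤ))| * |x ^ k * (q⁻¹ ^ ℓ * iteratedDeriv ℓ (φ n) (q⁻¹ * x))| := by
              rw [← abs_mul]; exact abs_sub _ _
          _ = F n x + q ^ (D - (n+1:ℤ)) * F n (q⁻¹ * x) := by
              rw [hxk, abs_of_pos (zpow_pos hq0 _), hF, ← hconst n]; ring
          _ ≤ (⨆ x, F n x) + q ^ (D - (n+1:ℤ)) * (⨆ x, F n x) := by
              gcongr <;> exact hle _
          _ = (1 + q ^ (D - (n+1:ℤ))) * (⨆ x, F n x) := by ring
      constructor
      · refine ⟨(1 + q ^ (D - (n+1:ℤ))) * (⨆ x, F n x), ?_⟩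
        rintro _ ⟨x, rfl⟩; exact hpt x
      · calc (⨆ x, F (n+1) x) ≤ (1 + q ^ (D - (n+1:ℤ))) * (⨆ x, F n x) := ciSup_le hpt
          _ ≤ (1 + q ^ (D - (n+1:ℤ)))
              * ((∏ j ∈ Finset.range n, (1 + q ^ (D - (j+1:ℤ)))) * (⨆ x, F 0 x)) := by
              gcongr
          _ = (∏ j ∈ Finset.range (n+1), (1 + q ^ (D - (j+1:ℤ)))) * (⨆ x, F 0 x) := by
              rw [Finset.prod_range_succ]; ring
  obtain ⟨hbm, hSm⟩ := claim m
  obtain ⟨hb0, -⟩ := claim 0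
  have hS0 : (0:ℝ) ≤ ⨆ x, F 0 x := le_trans (abs_nonneg _) (le_ciSup hb0 0)
  -- product bound by exponential
  have hprod : (∏ j ∈ Finset.range m, (1 + q ^ (D - (j+1:ℤ))))
      ≤ Real.exp (q ^ D / (q - 1)) := by
    have h1 : (∏ j ∈ Finset.range m, (1 + q ^ (D - (j+1:ℤ))))
        ≤ ∏ j ∈ Finset.range m, Real.exp (q ^ (D - (j+1:ℤ))) := by
      apply Finset.prod_le_prod
      · intro j _; positivity
      · intro j _
        have := Real.add_one_le_exp (q ^ (D - (j+1:ℤ)))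
        linarith
    have h2 : ∏ j ∈ Finset.range m, Real.exp (q ^ (D - (j+1:ℤ)))
        = Real.exp (∑ j ∈ Finset.range m, q ^ (D - (j+1:ℤ))) := (Real.exp_sum _ _).symm
    have hterm : ∀ j : ℕ, q ^ (D - (j+1:ℤ)) = q ^ D * q⁻¹ ^ (j+1) := by
      intro j
      have h3 : ((j:ℤ)+1) = ((j+1 : ℕ) : ℤ) := by push_cast; ring
      rw [zpow_sub₀ hq0.ne', h3, zpow_natCast, div_eq_mul_inv, inv_pow]
    have hr1 : q⁻¹ < 1 := inv_lt_one_of_one_lt₀ hq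
    have hr0 : (0:ℝ) ≤ q⁻¹ := (inv_pos.mpr hq0).le
    have hsum : ∑ j ∈ Finset.range m, q⁻¹ ^ (j+1) ≤ 1 / (q - 1) := by
      have hgs : ∑ j ∈ Finset.range m, q⁻¹ ^ j = (q⁻¹ ^ m - 1) / (q⁻¹ - 1) :=
        geom_sum_eq (ne_of_lt hr1) m
      have hsum1 : ∑ j ∈ Finset.range m, q⁻¹ ^ (j+1)
          = q⁻¹ * ((q⁻¹ ^ m - 1) / (q⁻¹ - 1)) := by
        rw [← hgs, Finset.mul_sum]
        exact Finset.sum_congr rfl fun j _ => pow_succ' q⁻¹ j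
      rw [hsum1]
      have htm : (0:ℝ) ≤ q⁻¹ ^ m := pow_nonneg hr0 m
      have hne : q ≠ 0 := hq0.ne'
      have h1 : q⁻¹ - 1 ≠ 0 := sub_ne_zero.mpr (ne_of_lt hr1)
      have h2 : q - 1 ≠ 0 := sub_ne_zero.mpr (ne_of_gt hq)
      have hiq : (0:ℝ) < 1 - q⁻¹ := by linarith
      have e1 : (q⁻¹ ^ m - 1) / (q⁻¹ - 1) = (1 - q⁻¹ ^ m) / (1 - q⁻¹) := by
        rw [div_eq_div_iff h1 (by linarith : (1:ℝ) - q⁻¹ ≠ 0)]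
        ring
      rw [e1]
      have step1 : q⁻¹ * ((1 - q⁻¹ ^ m) / (1 - q⁻¹)) ≤ q⁻¹ * (1 / (1 - q⁻¹)) := by
        gcongr
        linarith
      have step2 : q⁻¹ * (1 / (1 - q⁻¹)) = 1 / (q - 1) := by
        field_simp
      linarith
    have hsum2 : ∑ j ∈ Finset.range m, q ^ (D - (j+1:ℤ)) ≤ q ^ D / (q - 1) := by
      calc ∑ j ∈ Finset.range m, q ^ (D - (j+1:ℤ))
          = q ^ D * ∑ j ∈ Finset.range m, q⁻¹ ^ (j+1) := by
            rw [Finset.mul_sum]; exact Finset.sum_congr rfl fun j _ => hterm j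
        _ ≤ q ^ D * (1 / (q - 1)) := by gcongr
        _ = q ^ D / (q - 1) := by ring
    calc (∏ j ∈ Finset.range m, (1 + q ^ (D - (j+1:ℤ))))
        ≤ Real.exp (∑ j ∈ Finset.range m, q ^ (D - (j+1:ℤ))) := by rw [← h2]; exact h1
      _ ≤ Real.exp (q ^ D / (q - 1)) := Real.exp_le_exp.mpr hsum2
  rw [← hφ0]
  calc (⨆ x : ℝ, |x ^ k * iteratedDeriv ℓ (φ m) x|)
      ≤ (∏ j ∈ Finset.range m, (1 + q ^ (D - (j+1:ℤ)))) * (⨆ x, F 0 x) := hSm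
    _ ≤ Real.exp (q ^ D / (q - 1)) * (⨆ x, F 0 x) := by gcongr
    _ = Real.exp (q ^ D / (q - 1)) * (⨆ x : ℝ, |x ^ k * iteratedDeriv ℓ (φ 0) x|) := rfl
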